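/- arXiv:1801.04068 — 3 statements merged into one kernel-verified Lean document; each statement's English description precedes it below -/
import Mathlib

section
/- Let X, Λ, S be mutually independent random variables with X exponentially distributed with rate λ₁, Λ exponentially distributed with rate λ−λ₁ (0 < λ₁ < λ), and S a nonnegative random variable with P(S > 0) > 0. Then for every Borel set E ⊆ [0,∞), the conditional probability P(X ∈ E | X < min(S,Λ)) equals ∫_E λ e^{−λt} P(S > t) dt / (1 − E[e^{−λS}]). In other words, the conditional distribution of X given X < min(S,Λ) has density t ↦ λ e^{−λt} P(S > t)/(1 − E[e^{−λS}]) with respect to Lebesgue measure on [0,∞). -/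
open MeasureTheory ProbabilityTheory Real

lemma aux_surv_meas {Ω : Type*} [MeasurableSpace Ω] (μ : Measure Ω) (S : Ω → ℝ) :
    Measurable fun x : ℝ => μ {ω | x < S ω} :=
  Antitone.measurable (fun _ _ hab => measure_mono (fun _ h => lt_of_le_of_lt hab h))

lemma aux_expMeasure_apply {r : ℝ} {s : Set ℝ} (hs : MeasurableSet s) :
    expMeasure r s = ∫⁻ x in s, exponentialPDF r x := by
  rw [expMeasure, gammaMeasure, withDensity_apply _ hs]; rfl

lemma aux_expMeasure_Ioi {r x : ℝ} (hr : 0 < r) (hx : 0 ≤ x) :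
    expMeasure r (Set.Ioi x) = ENNReal.ofReal (Real.exp (-(r * x))) := by
  have hprob : IsProbabilityMeasure (expMeasure r) := isProbabilityMeasure_gammaMeasure one_pos hr
  have h1 : expMeasure r (Set.Iic x) = ENNReal.ofReal (1 - Real.exp (-(r * x))) := by
    rw [aux_expMeasure_apply measurableSet_Iic, lintegral_exponentialPDF_eq_antiDeriv hr x,
      if_pos hx]
  have h2 : expMeasure r (Set.Ioi x) = 1 - expMeasure r (Set.Iic x) := by
    rw [← Set.compl_Iic, measure_compl measurableSet_Iic (measure_ne_top _ _), measure_univ]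
  have hle : Real.exp (-(r * x)) ≤ 1 := by
    rw [Real.exp_le_one_iff]; simp; positivity
  rw [h2, h1, ← ENNReal.ofReal_one, ← ENNReal.ofReal_sub _ (by linarith [Real.exp_pos (-(r*x))])]
  norm_num

lemma aux_key_Ico {l c : ℝ} (hl : 0 < l) (hc : 0 ≤ c) :
    ∫⁻ x in Set.Ico 0 c, ENNReal.ofReal (l * Real.exp (-l * x))
      = ENNReal.ofReal (1 - Real.exp (-(l * c))) := by
  have h := lintegral_exponentialPDF_eq_antiDeriv hl c
  rw [if_pos hc] at h
  rw [← h, lintegral_Iic_eq_lintegral_Iio_add_Icc _ hc,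
    lintegral_exponentialPDF_of_nonpos le_rfl, zero_add,
    ← setLIntegral_congr MeasureTheory.Ico_ae_eq_Icc]
  refine setLIntegral_congr_fun_ae measurableSet_Ico (ae_of_all _ fun a ha => ?_)
  rw [exponentialPDF_of_nonneg ha.1, neg_mul]

lemma aux_exp_integrable {Ω : Type*} [MeasurableSpace Ω] (μ : Measure Ω) [IsProbabilityMeasure μ]
    {S : Ω → ℝ} (hSm : Measurable S) (hSnn : ∀ᵐ ω ∂μ, 0 ≤ S ω) {l : ℝ} (hl : 0 < l) :
    Integrable (fun ω => Real.exp (-l * S ω)) μ := by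
  refine Integrable.mono' (integrable_const 1)
    ((measurable_exp.comp ((measurable_const.mul hSm))).aestronglyMeasurable) ?_
  filter_upwards [hSnn] with ω hω
  rw [Real.norm_eq_abs, abs_of_pos (Real.exp_pos _), Real.exp_le_one_iff]
  nlinarith

lemma aux_survB {Ω : Type*} [MeasurableSpace Ω] (μ : Measure Ω) [IsProbabilityMeasure μ]
    {S : Ω → ℝ} (hSm : Measurable S) (hSnn : ∀ᵐ ω ∂μ, 0 ≤ S ω) {l : ℝ} (hl : 0 < l) :
    ∫⁻ x in Set.Ici 0, ENNReal.ofReal (l * Real.exp (-l * x)) * μ {ω | x < S ω}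
      = ENNReal.ofReal (1 - ∫ ω, Real.exp (-l * S ω) ∂μ) := by
  have hif : Measurable (Function.uncurry fun (x : ℝ) (ω : Ω) =>
      ENNReal.ofReal (l * Real.exp (-l * x)) * if x < S ω then 1 else 0) := by
    refine Measurable.mul ?_ ?_
    · exact (ENNReal.measurable_ofReal.comp
        ((measurable_const.mul (measurable_exp.comp (measurable_const.mul measurable_fst))))).comp
        measurable_id |>.comp measurable_id
    · exact Measurable.ite (measurableSet_lt measurable_fst (hSm.comp measurable_snd))
        measurable_const measurable_const
  have h1 : ∀ x : ℝ, μ {ω | x < S ω} = ∫⁻ ω, (if x < S ω then 1 else 0) ∂μ := by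
    intro x
    have : {ω | x < S ω} = S ⁻¹' Set.Ioi x := rfl
    rw [this, ← lintegral_indicator_one (hSm measurableSet_Ioi)]
    exact lintegral_congr fun ω => by by_cases h : x < S ω <;> simp [Set.indicator_apply, h]
  calc ∫⁻ x in Set.Ici 0, ENNReal.ofReal (l * Real.exp (-l * x)) * μ {ω | x < S ω}
      = ∫⁻ x in Set.Ici 0, ∫⁻ ω, ENNReal.ofReal (l * Real.exp (-l * x))
          * (if x < S ω then 1 else 0) ∂μ := by
        refine setLIntegral_congr_fun_ae measurableSet_Ici (ae_of_all _ fun x _ => ?_)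
        rw [h1 x, lintegral_const_mul _
          (Measurable.ite (measurableSet_lt measurable_const hSm) measurable_const
            measurable_const)]
    _ = ∫⁻ ω, ∫⁻ x in Set.Ici 0, ENNReal.ofReal (l * Real.exp (-l * x))
          * (if x < S ω then 1 else 0) ∂volume ∂μ := by
        exact lintegral_lintegral_swap hif.aemeasurable
    _ = ∫⁻ ω, ENNReal.ofReal (1 - Real.exp (-l * S ω)) ∂μ := by
        refine lintegral_congr_ae ?_
        filter_upwards [hSnn] with ω hω
        have : ∀ x : ℝ, ENNReal.ofReal (l * Real.exp (-l * x)) * (if x < S ω then 1 else 0)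
            = (Set.Iio (S ω)).indicator (fun x => ENNReal.ofReal (l * Real.exp (-l * x))) x := by
          intro x; simp [Set.indicator_apply, mul_ite]
        simp_rw [this]
        rw [lintegral_indicator measurableSet_Iio, Measure.restrict_restrict measurableSet_Iio,
          show Set.Iio (S ω) ∩ Set.Ici 0 = Set.Ico 0 (S ω) by
            rw [Set.inter_comm, Set.Ici_inter_Iio],
          aux_key_Ico hl hω, neg_mul]
    _ = ENNReal.ofReal (∫ ω, (1 - Real.exp (-l * S ω)) ∂μ) := by
        rw [← ofReal_integral_eq_lintegral_ofReal]
        · exact (integrable_const 1).sub (aux_exp_integrable μ hSm hSnn hl)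
        · filter_upwards [hSnn] with ω hω
          rw [Pi.zero_apply, sub_nonneg, Real.exp_le_one_iff]
          nlinarith
    _ = ENNReal.ofReal (1 - ∫ ω, Real.exp (-l * S ω) ∂μ) := by
        rw [integral_sub (integrable_const 1) (aux_exp_integrable μ hSm hSnn hl),
          integral_const, probReal_univ, smul_eq_mul, one_mul]

/-- The conditional distribution of `X` given `{X < min(S, Λ)}` has density
`t ↦ λ e^{-λ t} P(S > t) / (1 - E[e^{-λ S}])` on `[0, ∞)`: for every Borel set
`E ⊆ [0, ∞)`, `P(X ∈ E | X < min(S, Λ)) = (∫_E λ e^{-λ t} P(S > t) dt) / (1 - E[e^{-λ S}])`. -/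
theorem stmt_3 {Ω : Type*} [MeasurableSpace Ω] (μ : Measure Ω) [IsProbabilityMeasure μ]
    (X Λ S : Ω → ℝ) (hXm : Measurable X) (hΛm : Measurable Λ) (hSm : Measurable S)
    (hSnn : ∀ᵐ ω ∂μ, 0 ≤ S ω) (hSpos : 0 < μ {ω | 0 < S ω})
    (l l1 : ℝ) (hl1 : 0 < l1) (hl : l1 < l)
    (hX : Measure.map X μ = expMeasure l1)
    (hΛ : Measure.map Λ μ = expMeasure (l - l1))
    (hInd : iIndepFun (m := fun _ : Fin 3 => (inferInstance : MeasurableSpace ℝ)) ![X, Λ, S] μ) :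
    ∀ E : Set ℝ, MeasurableSet E → E ⊆ Set.Ici 0 →
      (μ {ω | X ω ∈ E ∧ X ω < min (S ω) (Λ ω)}).toReal
          / (μ {ω | X ω < min (S ω) (Λ ω)}).toReal
        = (∫ t in E, l * Real.exp (-l * t) * (μ {ω | t < S ω}).toReal)
          / (1 - ∫ ω, Real.exp (-l * S ω) ∂μ) := by
  intro E hE hEsub
  set T : Ω → ℝ := fun ω => min (S ω) (Λ ω) with hT
  have hTm : Measurable T := hSm.min hΛm
  have hm : ∀ i, Measurable (![X, Λ, S] i) := by
    intro i; fin_cases i <;> simpa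
  have hSΛ : IndepFun S Λ μ := by
    simpa using hInd.indepFun (show (2 : Fin 3) ≠ 1 by decide)
  have hXT : IndepFun X T μ := by
    have h := hInd.indepFun_prodMk hm 2 1 0 (by decide) (by decide)
    have h2 : IndepFun (fun a => (S a, Λ a)) X μ := by simpa using h
    exact (h2.comp (measurable_fst.min measurable_snd) measurable_id).symm
  have hl0 : 0 < l := hl1.trans hl
  have hll1 : 0 < l - l1 := by linarith
  have hΛtail : ∀ x : ℝ, 0 ≤ x →
      μ (Λ ⁻¹' Set.Ioi x) = ENNReal.ofReal (Real.exp (-((l - l1) * x))) := by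
    intro x hx
    rw [← Measure.map_apply hΛm measurableSet_Ioi, hΛ, aux_expMeasure_Ioi hll1 hx]
  -- Lemma A
  have hA : ∀ F : Set ℝ, MeasurableSet F → F ⊆ Set.Ici 0 →
      μ {ω | X ω ∈ F ∧ X ω < T ω}
        = ENNReal.ofReal (l1 / l)
          * ∫⁻ x in F, ENNReal.ofReal (l * Real.exp (-l * x)) * μ {ω | x < S ω} := by
    intro F hF hFsub
    have hs : MeasurableSet {p : ℝ × ℝ | p.1 ∈ F ∧ p.1 < p.2} :=
      (hF.preimage measurable_fst).inter (measurableSet_lt measurable_fst measurable_snd)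
    have hmap : μ.map (fun ω => (X ω, T ω)) = (expMeasure l1).prod (μ.map T) := by
      rw [← hX]
      exact (ProbabilityTheory.indepFun_iff_map_prod_eq_prod_map_map hXm.aemeasurable
        hTm.aemeasurable).mp hXT
    have step1 : μ {ω | X ω ∈ F ∧ X ω < T ω}
        = ((expMeasure l1).prod (μ.map T)) {p : ℝ × ℝ | p.1 ∈ F ∧ p.1 < p.2} := by
      rw [← hmap, Measure.map_apply (hXm.prodMk hTm) hs]
      rfl
    rw [step1, Measure.prod_apply hs]
    have step2 : ∀ x : ℝ, (μ.map T) (Prod.mk x ⁻¹' {p : ℝ × ℝ | p.1 ∈ F ∧ p.1 < p.2})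
        = F.indicator (fun x => (μ.map T) (Set.Ioi x)) x := by
      intro x
      by_cases hx : x ∈ F
      · rw [Set.indicator_of_mem hx]
        congr 1
        ext y; simp [hx]
      · rw [Set.indicator_of_notMem hx]
        convert measure_empty (μ := μ.map T)
        ext y; simp [hx]
    simp_rw [step2]
    rw [lintegral_indicator hF]
    have hTtail : ∀ x ∈ F, (μ.map T) (Set.Ioi x)
        = μ {ω | x < S ω} * ENNReal.ofReal (Real.exp (-((l - l1) * x))) := by
      intro x hx
      rw [Measure.map_apply hTm measurableSet_Ioi]
      have hsplit : T ⁻¹' Set.Ioi x = (S ⁻¹' Set.Ioi x) ∩ (Λ ⁻¹' Set.Ioi x) := by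
        ext ω
        simp [hT, Set.mem_preimage, Set.mem_Ioi, lt_min_iff]
      rw [hsplit, hSΛ.measure_inter_preimage_eq_mul _ _ measurableSet_Ioi measurableSet_Ioi,
        hΛtail x (hFsub hx)]
      rfl
    rw [setLIntegral_congr_fun_ae hF (ae_of_all _ hTtail)]
    have hgm : Measurable fun x : ℝ =>
        μ {ω | x < S ω} * ENNReal.ofReal (Real.exp (-((l - l1) * x))) :=
      (aux_surv_meas μ S).mul (ENNReal.measurable_ofReal.comp
        ((measurable_const.mul measurable_id).neg.exp))
    have hexp : expMeasure l1 = volume.withDensity (exponentialPDF l1) := rfl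
    have hpdfm : Measurable (exponentialPDF l1) :=
      ENNReal.measurable_ofReal.comp (measurable_exponentialPDFReal l1)
    rw [hexp, MeasureTheory.restrict_withDensity hF,
      lintegral_withDensity_eq_lintegral_mul _ hpdfm hgm]
    calc ∫⁻ x in F, (exponentialPDF l1 * fun x =>
            μ {ω | x < S ω} * ENNReal.ofReal (Real.exp (-((l - l1) * x)))) x
        = ∫⁻ x in F, ENNReal.ofReal (l1 / l)
            * (ENNReal.ofReal (l * Real.exp (-l * x)) * μ {ω | x < S ω}) := by
          refine setLIntegral_congr_fun_ae hF (ae_of_all _ fun x hx => ?_)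
          have hx0 : (0:ℝ) ≤ x := hFsub hx
          have key : ENNReal.ofReal (l1 * Real.exp (-(l1 * x)))
              * ENNReal.ofReal (Real.exp (-((l - l1) * x)))
              = ENNReal.ofReal (l1 / l) * ENNReal.ofReal (l * Real.exp (-l * x)) := by
            rw [← ENNReal.ofReal_mul (by positivity), ← ENNReal.ofReal_mul (by positivity)]
            congr 1
            rw [mul_assoc, ← Real.exp_add,
              show -(l1 * x) + -((l - l1) * x) = -l * x by ring]
            field_simp
          calc (exponentialPDF l1 * fun x =>
                μ {ω | x < S ω} * ENNReal.ofReal (Real.exp (-((l - l1) * x)))) x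
              = (ENNReal.ofReal (l1 * Real.exp (-(l1 * x)))
                  * ENNReal.ofReal (Real.exp (-((l - l1) * x)))) * μ {ω | x < S ω} := by
                simp only [Pi.mul_apply, exponentialPDF_of_nonneg hx0]
                ring
            _ = ENNReal.ofReal (l1 / l)
                  * (ENNReal.ofReal (l * Real.exp (-l * x)) * μ {ω | x < S ω}) := by
                rw [key]; ring
      _ = ENNReal.ofReal (l1 / l)
            * ∫⁻ x in F, ENNReal.ofReal (l * Real.exp (-l * x)) * μ {ω | x < S ω} :=
          lintegral_const_mul _
            (show Measurable fun x : ℝ =>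
                ENNReal.ofReal (l * Real.exp (-l * x)) * μ {ω | x < S ω} from
              (ENNReal.measurable_ofReal.comp
                (measurable_const.mul ((measurable_const.mul measurable_id').exp))).mul
                (aux_surv_meas μ S))
  -- denominator reduction
  have hnull : μ {ω | X ω < 0} = 0 := by
    have hpre : {ω | X ω < 0} = X ⁻¹' Set.Iio 0 := rfl
    rw [hpre, ← Measure.map_apply hXm measurableSet_Iio, hX,
      aux_expMeasure_apply measurableSet_Iio, lintegral_exponentialPDF_of_nonpos le_rfl]
  have hden : μ {ω | X ω < T ω} = μ {ω | X ω ∈ Set.Ici 0 ∧ X ω < T ω} := by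
    refine le_antisymm ?_ (measure_mono fun ω h => h.2)
    calc μ {ω | X ω < T ω}
        ≤ μ ({ω | X ω ∈ Set.Ici 0 ∧ X ω < T ω} ∪ {ω | X ω < 0}) := by
          refine measure_mono fun ω h => ?_
          by_cases h0 : (0:ℝ) ≤ X ω
          · exact Or.inl ⟨h0, h⟩
          · exact Or.inr (lt_of_not_ge h0)
      _ ≤ μ {ω | X ω ∈ Set.Ici 0 ∧ X ω < T ω} + μ {ω | X ω < 0} := measure_union_le _ _
      _ = μ {ω | X ω ∈ Set.Ici 0 ∧ X ω < T ω} := by rw [hnull, add_zero]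
  have hDen := hA (Set.Ici 0) measurableSet_Ici subset_rfl
  rw [aux_survB μ hSm hSnn hl0] at hDen
  have hNum := hA E hE hEsub
  have hB0 : 0 ≤ 1 - ∫ ω, Real.exp (-l * S ω) ∂μ := by
    have hle1 : ∫ ω, Real.exp (-l * S ω) ∂μ ≤ 1 := by
      calc ∫ ω, Real.exp (-l * S ω) ∂μ
          ≤ ∫ _ω, (1:ℝ) ∂μ := by
            refine integral_mono_ae (aux_exp_integrable μ hSm hSnn hl0) (integrable_const 1) ?_
            filter_upwards [hSnn] with ω hω
            rw [Real.exp_le_one_iff]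
            nlinarith
        _ = 1 := by simp
    linarith
  have hNfin : (∫⁻ x in E, ENNReal.ofReal (l * Real.exp (-l * x)) * μ {ω | x < S ω}) ≠ ⊤ := by
    refine ne_top_of_le_ne_top (b := ENNReal.ofReal (1 - ∫ ω, Real.exp (-l * S ω) ∂μ))
      ENNReal.ofReal_ne_top ?_
    rw [← aux_survB μ hSm hSnn hl0]
    exact lintegral_mono_set hEsub
  have hRHS : (∫ t in E, l * Real.exp (-l * t) * (μ {ω | t < S ω}).toReal)
      = (∫⁻ x in E, ENNReal.ofReal (l * Real.exp (-l * x)) * μ {ω | x < S ω}).toReal := by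
    have hfm : AEStronglyMeasurable (fun t : ℝ => l * Real.exp (-l * t) * (μ {ω | t < S ω}).toReal)
        (volume.restrict E) :=
      ((measurable_const.mul ((measurable_const.mul measurable_id').exp)).mul
        ((aux_surv_meas μ S).ennreal_toReal)).aestronglyMeasurable
    rw [integral_eq_lintegral_of_nonneg_ae (ae_of_all _ fun t => by positivity) hfm]
    congr 1
    refine lintegral_congr fun t => ?_
    rw [ENNReal.ofReal_mul (by positivity), ENNReal.ofReal_toReal (measure_ne_top μ _)]
  rw [hNum, hden, hDen, hRHS, ENNReal.toReal_mul, ENNReal.toReal_mul,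
    ENNReal.toReal_ofReal (by positivity : (0:ℝ) ≤ l1 / l), ENNReal.toReal_ofReal hB0]
  exact mul_div_mul_left _ _ (ne_of_gt (div_pos hl1 hl0))
end

section
/- Let X, Λ, S be mutually independent random variables with X exponentially distributed with rate λ₁, Λ exponentially distributed with rate λ−λ₁ (0 < λ₁ < λ), and S a nonnegative random variable with P(S > 0) > 0. Then for every real s < λ, the conditional moment generating function of X given the event {X < min(S,Λ)} satisfies E[e^{sX} · 1_{X < min(S,Λ)}] / P(X < min(S,Λ)) = λ(1 − P_{λ−s}) / ((λ−s)(1 − P_λ)), where P_x := E[e^{−xS}]. -/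
open MeasureTheory ProbabilityTheory Real

lemma expMeasure_Iic {r : ℝ} (hr : 0 < r) (x : ℝ) :
    expMeasure r (Set.Iic x) = ENNReal.ofReal (if 0 ≤ x then 1 - Real.exp (-(r * x)) else 0) := by
  rw [expMeasure, gammaMeasure, withDensity_apply _ measurableSet_Iic]
  exact lintegral_exponentialPDF_eq_antiDeriv hr x

lemma expMeasure_Ioi {r : ℝ} (hr : 0 < r) {x : ℝ} (hx : 0 ≤ x) :
    expMeasure r (Set.Ioi x) = ENNReal.ofReal (Real.exp (-(r * x))) := by
  haveI := isProbabilityMeasure_expMeasure hr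
  have h1 : Set.Ioi x = (Set.Iic x)ᶜ := by simp
  rw [h1, measure_compl measurableSet_Iic (measure_ne_top _ _), measure_univ,
    expMeasure_Iic hr, if_pos hx]
  have he : Real.exp (-(r * x)) ≤ 1 := exp_le_one_iff.2 (by nlinarith)
  rw [← ENNReal.ofReal_one, ← ENNReal.ofReal_sub _ (by linarith [exp_pos (-(r*x))])]
  norm_num

lemma lint_Ico {a c : ℝ} (ha : 0 < a) (hc : 0 ≤ c) {t : ℝ} (ht : 0 ≤ t) :
    ∫⁻ x in Set.Ico 0 t, ENNReal.ofReal (c * Real.exp (-(a * x)))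
      = ENNReal.ofReal (c / a * (1 - Real.exp (-(a * t)))) := by
  have hcont : Continuous fun x : ℝ => c * Real.exp (-(a * x)) := by
    continuity
  have hint : IntegrableOn (fun x : ℝ => c * Real.exp (-(a * x))) (Set.Ico 0 t) := by
    exact hcont.integrableOn_Icc.mono_set Set.Ico_subset_Icc_self
  rw [← ofReal_integral_eq_lintegral_ofReal hint
    (Filter.Eventually.of_forall fun x => by positivity)]
  congr 1
  rw [MeasureTheory.integral_Ico_eq_integral_Ioo, ← MeasureTheory.integral_Ioc_eq_integral_Ioo,
    ← intervalIntegral.integral_of_le ht]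
  have hderiv : ∀ x ∈ Set.uIcc 0 t, HasDerivAt (fun y => -(c/a) * Real.exp (-(a * y)))
      (c * Real.exp (-(a * x))) x := by
    intro x _
    have := (ProbabilityTheory.hasDerivAt_neg_exp_mul_exp (r := a) (x := x)).const_mul (c / a)
    have e1 : (fun y => -(c/a) * Real.exp (-(a * y))) = fun y => c / a * -Real.exp (-(a * y)) := by
      ext y; ring
    rw [e1]
    exact this.congr_deriv (by rw [← mul_assoc, div_mul_cancel₀ c ha.ne'])
  rw [intervalIntegral.integral_eq_sub_of_hasDerivAt hderiv
    (hcont.intervalIntegrable 0 t)]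
  simp [Real.exp_zero]
  ring

lemma key {Ω : Type*} [MeasurableSpace Ω] (μ : Measure Ω) [IsProbabilityMeasure μ]
    (X Λ S : Ω → ℝ) (hXm : Measurable X) (hΛm : Measurable Λ) (hSm : Measurable S)
    (hSnn : ∀ᵐ ω ∂μ, 0 ≤ S ω)
    (l l1 : ℝ) (hl1 : 0 < l1) (hl : l1 < l)
    (hX : Measure.map X μ = expMeasure l1)
    (hΛ : Measure.map Λ μ = expMeasure (l - l1))
    (hInd : iIndepFun ![X, Λ, S] μ)
    (s : ℝ) (hs : s < l) :
    (∫ ω in {ω | X ω < min (S ω) (Λ ω)}, Real.exp (s * X ω) ∂μ)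
      = l1 / (l - s) * (1 - ∫ ω, Real.exp (-((l - s) * S ω)) ∂μ) := by
  set a : ℝ := l - s with ha_def
  have ha : 0 < a := by simp [ha_def]; linarith
  have hl2 : 0 < l - l1 := by linarith
  set ν1 := expMeasure l1 with hν1
  set ν2 := expMeasure (l - l1) with hν2
  set νS := Measure.map S μ with hνS
  haveI : IsProbabilityMeasure ν1 := isProbabilityMeasure_expMeasure hl1
  haveI : IsProbabilityMeasure ν2 := isProbabilityMeasure_expMeasure hl2
  haveI : IsProbabilityMeasure νS := Measure.isProbabilityMeasure_map hSm.aemeasurable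
  have hm : ∀ i, Measurable (![X, Λ, S] i) := by
    intro i; fin_cases i <;> assumption
  -- joint law
  have hXΛ_ind : IndepFun (fun ω => (X ω, Λ ω)) S μ := by
    have := hInd.indepFun_prodMk hm 0 1 2 (by decide) (by decide)
    simpa using this
  have hXΛmap : Measure.map (fun ω => (X ω, Λ ω)) μ = ν1.prod ν2 := by
    have h01 : IndepFun X Λ μ := by
      have := hInd.indepFun (show (0 : Fin 3) ≠ 1 by decide)
      simpa using this
    rw [(indepFun_iff_map_prod_eq_prod_map_map hXm.aemeasurable hΛm.aemeasurable).mp h01,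
      hX, hΛ]
  have hjoint : Measure.map (fun ω => ((X ω, Λ ω), S ω)) μ = (ν1.prod ν2).prod νS := by
    rw [(indepFun_iff_map_prod_eq_prod_map_map (hXm.prodMk hΛm).aemeasurable
      hSm.aemeasurable).mp hXΛ_ind, hXΛmap]
  -- the integrand on the product space
  set B : Set ((ℝ × ℝ) × ℝ) := {p | p.1.1 < min p.2 p.1.2} with hB
  have hBmeas : MeasurableSet B :=
    measurableSet_lt (measurable_fst.comp measurable_fst)
      ((measurable_snd).min (measurable_snd.comp measurable_fst))
  set F : (ℝ × ℝ) × ℝ → ENNReal :=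
    B.indicator (fun p => ENNReal.ofReal (Real.exp (s * p.1.1))) with hF
  have hFm : Measurable F :=
    Measurable.indicator
      ((measurable_fst.comp measurable_fst).const_mul s).exp.ennreal_ofReal hBmeas
  have hTm : Measurable (fun ω => ((X ω, Λ ω), S ω)) := (hXm.prodMk hΛm).prodMk hSm
  have hA : MeasurableSet {ω | X ω < min (S ω) (Λ ω)} :=
    measurableSet_lt hXm (hSm.min hΛm)
  -- Step 1 : Bochner → lintegral
  have step1 : (∫ ω in {ω | X ω < min (S ω) (Λ ω)}, Real.exp (s * X ω) ∂μ)
      = (∫⁻ p, F p ∂((ν1.prod ν2).prod νS)).toReal := by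
    rw [integral_eq_lintegral_of_nonneg_ae
      (Filter.Eventually.of_forall fun ω => (exp_pos _).le)
      ((hXm.const_mul s).exp.aestronglyMeasurable.restrict)]
    congr 1
    calc ∫⁻ ω in {ω | X ω < min (S ω) (Λ ω)}, ENNReal.ofReal (Real.exp (s * X ω)) ∂μ
        = ∫⁻ ω, F ((X ω, Λ ω), S ω) ∂μ := by
          rw [← lintegral_indicator hA]
          refine lintegral_congr fun ω => ?_
          by_cases h : X ω < min (S ω) (Λ ω)
          · rw [Set.indicator_of_mem (show ω ∈ {ω | X ω < min (S ω) (Λ ω)} from h), hF,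
              Set.indicator_of_mem (show ((X ω, Λ ω), S ω) ∈ B from h)]
          · rw [Set.indicator_of_notMem (show ω ∉ {ω | X ω < min (S ω) (Λ ω)} from h), hF,
              Set.indicator_of_notMem (show ((X ω, Λ ω), S ω) ∉ B from h)]
      _ = ∫⁻ p, F p ∂((ν1.prod ν2).prod νS) := by
          rw [← hjoint, lintegral_map hFm hTm]
  -- innermost integral over y
  have inner_y : ∀ x t : ℝ, (∫⁻ y, F ((x, y), t) ∂ν2)
      = if x < t then ENNReal.ofReal (Real.exp (s * x)) * ν2 (Set.Ioi x) else 0 := by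
    intro x t
    split_ifs with h
    · rw [← setLIntegral_const]
      rw [← lintegral_indicator measurableSet_Ioi]
      refine lintegral_congr fun y => ?_
      by_cases hy : x < y
      · rw [hF, Set.indicator_of_mem (by simp [hB, lt_min_iff, h, hy]),
          Set.indicator_of_mem (Set.mem_Ioi.2 hy)]
      · rw [hF, Set.indicator_of_notMem (by simp [hB, lt_min_iff, hy]),
          Set.indicator_of_notMem (by simpa using hy)]
    · have : ∀ y : ℝ, F ((x, y), t) = 0 := fun y =>
        Set.indicator_of_notMem (by simp [hB, lt_min_iff, h]) _
      simp [this]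
  -- integral over x for fixed t ≥ 0
  have hx_int : ∀ t : ℝ, 0 ≤ t →
      (∫⁻ q, F (q, t) ∂(ν1.prod ν2)) = ENNReal.ofReal (l1 / a * (1 - Real.exp (-(a * t)))) := by
    intro t ht
    have hFt : Measurable fun q : ℝ × ℝ => F (q, t) :=
      hFm.comp (measurable_id.prodMk measurable_const)
    rw [lintegral_prod _ hFt.aemeasurable]
    have hg : Measurable fun x : ℝ => ∫⁻ y, F ((x, y), t) ∂ν2 :=
      Measurable.lintegral_prod_right hFt
    have hν1d : ν1 = volume.withDensity (exponentialPDF l1) := rfl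
    rw [hν1d, lintegral_withDensity_eq_lintegral_mul _
      (show Measurable (exponentialPDF l1) from
        (measurable_exponentialPDFReal l1).ennreal_ofReal) hg]
    rw [← lint_Ico ha hl1.le ht, ← lintegral_indicator measurableSet_Ico]
    refine lintegral_congr fun x => ?_
    simp only [Pi.mul_apply, inner_y x t]
    by_cases hx0 : 0 ≤ x
    · by_cases hxt : x < t
      · rw [if_pos hxt, Set.indicator_of_mem (Set.mem_Ico.2 ⟨hx0, hxt⟩),
          expMeasure_Ioi hl2 hx0, exponentialPDF_of_nonneg hx0,
          ← ENNReal.ofReal_mul (by positivity), ← ENNReal.ofReal_mul (by positivity)]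
        congr 1
        simp only [mul_assoc, ← Real.exp_add]
        ring_nf
        rw [ha_def]; ring_nf
      · rw [if_neg hxt, Set.indicator_of_notMem (by simp [Set.mem_Ico, hxt]), mul_zero]
    · rw [Set.indicator_of_notMem (by simp [Set.mem_Ico, hx0]),
        exponentialPDF_of_neg (lt_of_not_ge hx0), zero_mul]
  -- outer integral over t
  have hSnn' : ∀ᵐ t ∂νS, 0 ≤ t := by
    rw [hνS, ae_map_iff hSm.aemeasurable measurableSet_Ici]
    exact hSnn
  have hexp_meas : Measurable fun t : ℝ => Real.exp (-(a * t)) :=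
    (measurable_id.const_mul a).neg.exp
  have hexp_int : Integrable (fun t : ℝ => Real.exp (-(a * t))) νS := by
    refine Integrable.mono' (integrable_const 1) hexp_meas.aestronglyMeasurable ?_
    filter_upwards [hSnn'] with t ht
    rw [Real.norm_eq_abs, abs_of_pos (exp_pos _)]
    exact exp_le_one_iff.2 (by nlinarith)
  have hf_int : Integrable (fun t : ℝ => l1 / a * (1 - Real.exp (-(a * t)))) νS :=
    ((integrable_const 1).sub hexp_int).const_mul _
  have step2 : ∫⁻ p, F p ∂((ν1.prod ν2).prod νS)
      = ENNReal.ofReal (∫ t, l1 / a * (1 - Real.exp (-(a * t))) ∂νS) := by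
    rw [lintegral_prod_symm' _ hFm]
    rw [ofReal_integral_eq_lintegral_ofReal hf_int ?nn]
    case nn =>
      filter_upwards [hSnn'] with t ht
      have h2 : Real.exp (-(a * t)) ≤ 1 := exp_le_one_iff.2 (by nlinarith)
      have h3 : (0:ℝ) ≤ l1 / a := by positivity
      exact mul_nonneg h3 (by linarith)
    refine lintegral_congr_ae ?_
    filter_upwards [hSnn'] with t ht
    rw [hx_int t ht]
  -- compute the Bochner integral over t
  have step3 : ∫ t, l1 / a * (1 - Real.exp (-(a * t))) ∂νS
      = l1 / a * (1 - ∫ ω, Real.exp (-(a * S ω)) ∂μ) := by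
    rw [integral_const_mul, integral_sub (integrable_const 1) hexp_int, integral_const]
    simp only [measure_univ, ENNReal.toReal_one, smul_eq_mul, one_mul, probReal_univ, mul_one]
    rw [hνS, integral_map hSm.aemeasurable hexp_meas.aestronglyMeasurable]
  have hPle : ∫ ω, Real.exp (-(a * S ω)) ∂μ ≤ 1 := by
    have h1 : (1 : ℝ) = ∫ _ω, (1 : ℝ) ∂μ := by simp
    rw [h1]
    refine integral_mono_ae ?_ (integrable_const 1) ?_
    · exact (integrable_map_measure hexp_meas.aestronglyMeasurable hSm.aemeasurable).mp hexp_int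
    · filter_upwards [hSnn] with ω hω
      exact exp_le_one_iff.2 (by nlinarith)
  have h4 : (0:ℝ) ≤ l1 / a := by positivity
  rw [step1, step2, step3, ENNReal.toReal_ofReal (mul_nonneg h4 (by linarith))]


/-- Conditional MGF of `X` given `{X < min(S, Λ)}`: for every `s < λ`,
`E[e^{s X} | X < min(S, Λ)] = λ(1 - P_{λ-s}) / ((λ-s)(1 - P_λ))` where `P_x = E[e^{-x S}]`. -/
theorem stmt_4 {Ω : Type*} [MeasurableSpace Ω] (μ : Measure Ω) [IsProbabilityMeasure μ]
    (X Λ S : Ω → ℝ) (hXm : Measurable X) (hΛm : Measurable Λ) (hSm : Measurable S)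
    (hSnn : ∀ᵐ ω ∂μ, 0 ≤ S ω) (hSpos : 0 < μ {ω | 0 < S ω})
    (l l1 : ℝ) (hl1 : 0 < l1) (hl : l1 < l)
    (hX : Measure.map X μ = expMeasure l1)
    (hΛ : Measure.map Λ μ = expMeasure (l - l1))
    (hInd : iIndepFun ![X, Λ, S] μ)
    (P : ℝ → ℝ) (hP : ∀ x : ℝ, P x = ∫ ω, Real.exp (-x * S ω) ∂μ) :
    ∀ s : ℝ, s < l →
      (∫ ω in {ω | X ω < min (S ω) (Λ ω)}, Real.exp (s * X ω) ∂μ)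
          / (μ {ω | X ω < min (S ω) (Λ ω)}).toReal
        = l * (1 - P (l - s)) / ((l - s) * (1 - P l)) := by
  intro s hs
  have hl0 : 0 < l := lt_trans hl1 hl
  have hP' : ∀ x : ℝ, P x = ∫ ω, Real.exp (-(x * S ω)) ∂μ := by
    intro x; rw [hP]; simp [neg_mul]
  -- numerator
  have hnum := key μ X Λ S hXm hΛm hSm hSnn l l1 hl1 hl hX hΛ hInd s hs
  rw [← hP' (l - s)] at hnum
  -- denominator via s = 0
  have hden := key μ X Λ S hXm hΛm hSm hSnn l l1 hl1 hl hX hΛ hInd 0 hl0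
  have hden' : (μ {ω | X ω < min (S ω) (Λ ω)}).toReal = l1 / l * (1 - P l) := by
    simp only [zero_mul, Real.exp_zero, sub_zero] at hden
    rw [hP' l, ← hden, setIntegral_const]
    simp
    rfl
  -- 1 - P l > 0
  have hexp_meas : Measurable fun ω => Real.exp (-(l * S ω)) :=
    ((hSm.const_mul l).neg).exp
  have hexp_int : Integrable (fun ω => Real.exp (-(l * S ω))) μ := by
    refine Integrable.mono' (integrable_const 1) hexp_meas.aestronglyMeasurable ?_
    filter_upwards [hSnn] with ω hω
    rw [Real.norm_eq_abs, abs_of_pos (Real.exp_pos _)]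
    exact Real.exp_le_one_iff.2 (by nlinarith)
  have hPl_lt : 0 < 1 - P l := by
    have hgi : Integrable (fun ω => 1 - Real.exp (-(l * S ω))) μ :=
      (integrable_const 1).sub hexp_int
    have hint : ∫ ω, (1 - Real.exp (-(l * S ω))) ∂μ = 1 - P l := by
      rw [integral_sub (integrable_const 1) hexp_int, integral_const, hP' l]
      simp
    rw [← hint]
    rw [integral_pos_iff_support_of_nonneg_ae ?nn hgi]
    case nn =>
      filter_upwards [hSnn] with ω hω
      have : Real.exp (-(l * S ω)) ≤ 1 := Real.exp_le_one_iff.2 (by nlinarith)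
      simp only [Pi.zero_apply]
      linarith
    refine lt_of_lt_of_le hSpos (measure_mono ?_)
    intro ω hω
    have hω' : (0:ℝ) < S ω := hω
    have : Real.exp (-(l * S ω)) < 1 := Real.exp_lt_one_iff.2 (by nlinarith)
    simp only [Function.mem_support]
    intro hcontra
    nlinarith [hcontra]
  rw [hnum, hden']
  have h1 : l - s ≠ 0 := by linarith
  have h2 : (1 : ℝ) - P l ≠ 0 := ne_of_gt hPl_lt
  field_simp
end

section
/- (First two moments of the interdeparture time.) Let S be a nonnegative random variable, let 0 < λ₁ ≤ λ, write P(x) := E[e^{−xS}] for x > 0, and assume P(λ) > 0. Define φ(s) := λ₁ P(λ−s) / (λ₁ P(λ−s) − s) for s in a neighborhood of 0 (the denominator is nonzero near s = 0 since λ₁P(λ) > 0). Then φ is twice differentiable at 0 with φ(0) = 1, φ′(0) = 1/(λ₁ P(λ)), and φ″(0) = 2/(λ₁² P(λ)²) − 2 E[S e^{−λS}]/(λ₁ P(λ)²). In particular, if Y is a random variable whose moment generating function equals φ near 0, then E[Y] = 1/(λ₁P(λ)) and E[Y²] = 2(1/(λ₁²P(λ)²) − E[Se^{−λS}]/(λ₁P(λ)²)).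 -/
open MeasureTheory ProbabilityTheory Real Filter Metric

private lemma helper_le_exp (c t : ℝ) (hc : 0 < c) :
    t ≤ 1 / c * Real.exp (c * t) := by
  have h := Real.add_one_le_exp (c * t)
  rw [div_mul_eq_mul_div, le_div_iff₀ hc]
  nlinarith

private lemma helper_sq_le_exp (c t : ℝ) (hc : 0 < c) (ht : 0 ≤ t) :
    t ^ 2 ≤ 4 / c ^ 2 * Real.exp (c * t) := by
  have h := helper_le_exp (c / 2) t (by linarith)
  have hE : Real.exp (c / 2 * t) * Real.exp (c / 2 * t) = Real.exp (c * t) := by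
    rw [← Real.exp_add]; ring_nf
  have hEpos := (Real.exp_pos (c / 2 * t)).le
  have h2 : t * t ≤ (1 / (c / 2) * Real.exp (c / 2 * t)) * (1 / (c / 2) * Real.exp (c / 2 * t)) :=
    mul_le_mul h h ht (le_trans ht h)
  calc t ^ 2 = t * t := sq t
    _ ≤ (1 / (c / 2) * Real.exp (c / 2 * t)) * (1 / (c / 2) * Real.exp (c / 2 * t)) := h2
    _ = 4 / c ^ 2 * (Real.exp (c / 2 * t) * Real.exp (c / 2 * t)) := by field_simp; ring
    _ = 4 / c ^ 2 * Real.exp (c * t) := by rw [hE]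

private lemma aux_hasDerivAt_integral_exp {Ω : Type*} [MeasurableSpace Ω] (μ : Measure Ω)
    (X : Ω → ℝ) (hX : AEMeasurable X μ) (n : ℕ) (t₀ ε : ℝ) (hε : 0 < ε) (g : Ω → ℝ)
    (hg : Integrable g μ)
    (hb : ∀ᵐ ω ∂μ, ∀ x ∈ Metric.ball t₀ ε, |X ω| ^ (n + 1) * Real.exp (x * X ω) ≤ g ω)
    (hi : Integrable (fun ω => X ω ^ n * Real.exp (t₀ * X ω)) μ) :
    Integrable (fun ω => X ω ^ (n + 1) * Real.exp (t₀ * X ω)) μ ∧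
      HasDerivAt (fun x => ∫ ω, X ω ^ n * Real.exp (x * X ω) ∂μ)
        (∫ ω, X ω ^ (n + 1) * Real.exp (t₀ * X ω) ∂μ) t₀ := by
  have hmeas : ∀ (x : ℝ) (m : ℕ),
      AEStronglyMeasurable (fun ω => X ω ^ m * Real.exp (x * X ω)) μ :=
    fun x m => ((hX.pow_const m).mul (Real.measurable_exp.comp_aemeasurable (hX.const_mul x))).aestronglyMeasurable
  refine hasDerivAt_integral_of_dominated_loc_of_deriv_le (μ := μ)
    (F := fun x ω => X ω ^ n * Real.exp (x * X ω))
    (F' := fun x ω => X ω ^ (n + 1) * Real.exp (x * X ω)) (Metric.ball_mem_nhds t₀ hε)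
    (Filter.Eventually.of_forall fun x => hmeas x n) hi (hmeas t₀ (n + 1)) ?_ hg ?_
  · filter_upwards [hb] with ω hω x hx
    calc ‖X ω ^ (n + 1) * Real.exp (x * X ω)‖
        = |X ω| ^ (n + 1) * Real.exp (x * X ω) := by
          rw [norm_mul, norm_pow, Real.norm_eq_abs, Real.norm_eq_abs,
            abs_of_pos (Real.exp_pos _)]
      _ ≤ g ω := hω x hx
  · refine Filter.Eventually.of_forall fun ω x _ => ?_
    have h1 : HasDerivAt (fun x : ℝ => Real.exp (x * X ω))
        (Real.exp (x * X ω) * X ω) x := (hasDerivAt_mul_const (X ω)).exp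
    have := h1.const_mul (X ω ^ n)
    refine this.congr_deriv ?_
    simp only [pow_succ]; ring

/-- First two moments of the interdeparture time: the function
`φ(s) = λ₁ P(λ-s) / (λ₁ P(λ-s) - s)` (with `P` the Laplace transform of the service time `S`)
satisfies `φ(0) = 1`, `φ'(0) = 1/(λ₁ P(λ))` and
`φ''(0) = 2/(λ₁² P(λ)²) - 2 E[S e^{-λ S}]/(λ₁ P(λ)²)`; in particular any random variable `Y`
whose MGF agrees with `φ` near `0` has these as its first two moments. -/
theorem stmt_14 {Ω : Type*} [MeasurableSpace Ω] (μ : Measure Ω) [IsProbabilityMeasure μ]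
    (S : Ω → ℝ) (hSm : Measurable S) (hSnn : ∀ᵐ ω ∂μ, 0 ≤ S ω)
    (l l1 : ℝ) (hl1 : 0 < l1) (hll : l1 ≤ l)
    (P : ℝ → ℝ) (hP : ∀ x : ℝ, P x = ∫ ω, Real.exp (-x * S ω) ∂μ)
    (hp : 0 < P l)
    (φ : ℝ → ℝ) (hφ : ∀ s : ℝ, φ s = l1 * P (l - s) / (l1 * P (l - s) - s)) :
    φ 0 = 1 ∧
    HasDerivAt φ (1 / (l1 * P l)) 0 ∧
    HasDerivAt (deriv φ)
      (2 / (l1 ^ 2 * P l ^ 2)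
        - 2 * (∫ ω, S ω * Real.exp (-l * S ω) ∂μ) / (l1 * P l ^ 2)) 0 ∧
    ∀ Y : Ω → ℝ, (∀ᶠ s in nhds (0 : ℝ), mgf Y μ s = φ s) →
      (∫ ω, Y ω ∂μ) = 1 / (l1 * P l) ∧
      (∫ ω, (Y ω) ^ 2 ∂μ)
        = 2 * (1 / (l1 ^ 2 * P l ^ 2)
          - (∫ ω, S ω * Real.exp (-l * S ω) ∂μ) / (l1 * P l ^ 2)) := by

  have hl : 0 < l := lt_of_lt_of_le hl1 hll
  set X : Ω → ℝ := fun ω => -S ω with hX_def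
  have hXae : AEMeasurable X μ := (hSm.neg).aemeasurable
  set Q : ℝ → ℝ := fun x => ∫ ω, S ω * Real.exp (-x * S ω) ∂μ with hQ_def
  have hfun0 : ∀ x : ℝ, (∫ ω, X ω ^ 0 * Real.exp (x * X ω) ∂μ) = P x := by
    intro x; rw [hP x]; congr 1; funext ω
    simp [hX_def, mul_neg, neg_mul]
  have hfun1 : ∀ x : ℝ, (∫ ω, X ω ^ 1 * Real.exp (x * X ω) ∂μ) = -(Q x) := by
    intro x
    rw [hQ_def, ← integral_neg]; congr 1; funext ω
    simp [hX_def, mul_neg, neg_mul]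
  have hint0 : ∀ x : ℝ, 0 ≤ x → Integrable (fun ω => X ω ^ 0 * Real.exp (x * X ω)) μ := by
    intro x hx
    refine Integrable.mono' (integrable_const 1)
      (((hXae.pow_const 0).mul
        (Real.measurable_exp.comp_aemeasurable (hXae.const_mul x))).aestronglyMeasurable) ?_
    filter_upwards [hSnn] with ω hω
    rw [pow_zero, one_mul, Real.norm_eq_abs, abs_of_pos (Real.exp_pos _)]
    rw [Real.exp_le_one_iff]
    simp only [hX_def, mul_neg]
    exact neg_nonpos.2 (mul_nonneg hx hω)
  have hDP : ∀ x : ℝ, 0 < x →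
      Integrable (fun ω => X ω ^ 1 * Real.exp (x * X ω)) μ ∧ HasDerivAt P (-(Q x)) x := by
    intro x hx
    have hb : ∀ᵐ ω ∂μ, ∀ y ∈ Metric.ball x (x / 2),
        |X ω| ^ (0 + 1) * Real.exp (y * X ω) ≤ (fun _ : Ω => 2 / x) ω := by
      filter_upwards [hSnn] with ω hω y hy
      have hy2 : x / 2 ≤ y := by
        have h := abs_lt.1 (mem_ball_iff_norm.1 hy)
        have : |y - x| < x / 2 := by simpa [Real.norm_eq_abs] using mem_ball_iff_norm.1 hy
        have := abs_lt.1 this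
        linarith [this.1]
      have habs : |X ω| = S ω := by simp [hX_def, abs_of_nonneg hω]
      rw [zero_add, pow_one, habs]
      have h1 : Real.exp (y * X ω) ≤ Real.exp (-(x / 2) * S ω) := by
        apply Real.exp_le_exp.2
        simp only [hX_def, mul_neg, neg_mul]
        exact neg_le_neg (mul_le_mul_of_nonneg_right hy2 hω)
      have h2 : S ω ≤ 1 / (x / 2) * Real.exp (x / 2 * S ω) :=
        helper_le_exp _ _ (by linarith)
      calc S ω * Real.exp (y * X ω) ≤ S ω * Real.exp (-(x / 2) * S ω) :=
            mul_le_mul_of_nonneg_left h1 hω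
        _ ≤ (1 / (x / 2) * Real.exp (x / 2 * S ω)) * Real.exp (-(x / 2) * S ω) :=
            mul_le_mul_of_nonneg_right h2 (Real.exp_pos _).le
        _ = 1 / (x / 2) * Real.exp (x / 2 * S ω + -(x / 2) * S ω) := by
            rw [Real.exp_add]; ring
        _ = 2 / x := by
            have : x / 2 * S ω + -(x / 2) * S ω = 0 := by ring
            rw [this, Real.exp_zero, mul_one]
            field_simp
    have haux := aux_hasDerivAt_integral_exp μ X hXae 0 x (x / 2) (by linarith)
      (fun _ => 2 / x) (integrable_const _) hb (hint0 x hx.le)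
    refine ⟨haux.1, ?_⟩
    have h2 := haux.2
    rw [show (fun y => ∫ ω, X ω ^ 0 * Real.exp (y * X ω) ∂μ) = P from funext hfun0,
      hfun1 x] at h2
    exact h2
  have hQcont : ContinuousAt Q l := by
    have hb : ∀ᵐ ω ∂μ, ∀ y ∈ Metric.ball l (l / 2),
        |X ω| ^ (1 + 1) * Real.exp (y * X ω) ≤ (fun _ : Ω => 4 / (l / 2) ^ 2) ω := by
      filter_upwards [hSnn] with ω hω y hy
      have hy2 : l / 2 ≤ y := by
        have : |y - l| < l / 2 := by simpa [Real.norm_eq_abs] using mem_ball_iff_norm.1 hy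
        have := abs_lt.1 this
        linarith [this.1]
      have habs : |X ω| = S ω := by simp [hX_def, abs_of_nonneg hω]
      rw [habs]
      have h1 : Real.exp (y * X ω) ≤ Real.exp (-(l / 2) * S ω) := by
        apply Real.exp_le_exp.2
        simp only [hX_def, mul_neg, neg_mul]
        exact neg_le_neg (mul_le_mul_of_nonneg_right hy2 hω)
      have h2 : S ω ^ (1 + 1) ≤ 4 / (l / 2) ^ 2 * Real.exp (l / 2 * S ω) :=
        helper_sq_le_exp _ _ (by linarith) hω
      calc S ω ^ (1 + 1) * Real.exp (y * X ω)
          ≤ S ω ^ (1 + 1) * Real.exp (-(l / 2) * S ω) :=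
            mul_le_mul_of_nonneg_left h1 (by positivity)
        _ ≤ (4 / (l / 2) ^ 2 * Real.exp (l / 2 * S ω)) * Real.exp (-(l / 2) * S ω) :=
            mul_le_mul_of_nonneg_right h2 (Real.exp_pos _).le
        _ = 4 / (l / 2) ^ 2 * Real.exp (l / 2 * S ω + -(l / 2) * S ω) := by
            rw [Real.exp_add]; ring
        _ = 4 / (l / 2) ^ 2 := by
            have : l / 2 * S ω + -(l / 2) * S ω = 0 := by ring
            rw [this, Real.exp_zero, mul_one]
    have haux := aux_hasDerivAt_integral_exp μ X hXae 1 l (l / 2) (by linarith)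
      (fun _ => 4 / (l / 2) ^ 2) (integrable_const _) hb (hDP l hl).1
    have h2 := haux.2.continuousAt
    rw [show (fun y => ∫ ω, X ω ^ 1 * Real.exp (y * X ω) ∂μ) = fun y => -(Q y) from
      funext hfun1] at h2
    have h3 : ContinuousAt (fun y => -(-Q y)) l := h2.neg
    simp only [neg_neg] at h3
    exact h3
  -- N side
  set a : ℝ := l1 * P l with ha_def
  have ha : 0 < a := mul_pos hl1 hp
  set N : ℝ → ℝ := fun s => l1 * P (l - s) with hN_def
  set NP : ℝ → ℝ := fun s => l1 * Q (l - s) with hNP_def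
  have hN : ∀ s : ℝ, s < l → HasDerivAt N (NP s) s := by
    intro s hs
    have h1 : HasDerivAt (fun t : ℝ => l - t) (-1) s := (hasDerivAt_id s).const_sub l
    have h2 := ((hDP (l - s) (by linarith)).2).comp s h1
    have h3 := h2.const_mul l1
    refine h3.congr_deriv ?_
    simp [hNP_def]
  have hN0val : N 0 = a := by simp [hN_def, ha_def]
  set b : ℝ := l1 * Q l with hb_def
  have hNP0 : NP 0 = b := by simp [hNP_def, hb_def]
  have hNPc : ContinuousAt NP 0 := by
    have hQ' : ContinuousAt Q (l - 0) := by rwa [sub_zero]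
    have hsub : ContinuousAt (fun s : ℝ => l - s) 0 :=
      (continuous_const.sub continuous_id).continuousAt
    exact continuousAt_const.mul (hQ'.comp hsub)
  have hNbig : ∀ᶠ s in nhds (0:ℝ), a / 2 < N s := by
    have hNc : ContinuousAt N 0 := (hN 0 hl).continuousAt
    apply hNc.eventually (p := fun y => a / 2 < y)
    rw [hN0val]
    exact eventually_gt_nhds (by linarith)
  obtain ⟨r₀, hr₀, hball⟩ := Metric.eventually_nhds_iff_ball.mp hNbig
  set r : ℝ := min r₀ (min (a / 4) (l / 2)) with hr_def
  have hr : 0 < r := by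
    exact lt_min hr₀ (lt_min (by linarith) (by linarith))
  have hfacts : ∀ s ∈ ball (0:ℝ) r, s < l ∧ a / 2 < N s ∧ 0 < N s - s := by
    intro s hs
    have habs : |s| < r := by simpa [Real.dist_eq] using mem_ball_iff_norm.1 hs
    have h1 : |s| < r₀ := lt_of_lt_of_le habs (min_le_left _ _)
    have h2 : |s| < a / 4 := lt_of_lt_of_le habs ((min_le_right _ _).trans (min_le_left _ _))
    have h3 : |s| < l / 2 := lt_of_lt_of_le habs ((min_le_right _ _).trans (min_le_right _ _))
    have hNs : a / 2 < N s := hball s (by simpa [Metric.mem_ball, Real.dist_eq] using h1)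
    refine ⟨?_, hNs, ?_⟩
    · have := le_abs_self s; linarith
    · have := le_abs_self s; linarith
  have hφf : φ = fun s => N s / (N s - s) := by
    funext s; rw [hφ s]
  have hφd : ∀ s ∈ ball (0:ℝ) r,
      HasDerivAt φ ((N s - s * NP s) / (N s - s) ^ 2) s := by
    intro s hs
    obtain ⟨hsl, hNs, hDpos⟩ := hfacts s hs
    have h1 := hN s hsl
    have h2 : HasDerivAt (fun t => N t - t) (NP s - 1) s := h1.sub (hasDerivAt_id s)
    have h3 := h1.div h2 (ne_of_gt hDpos)
    rw [hφf]
    refine h3.congr_deriv ?_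
    rw [div_eq_div_iff (pow_ne_zero 2 hDpos.ne') (pow_ne_zero 2 hDpos.ne')]
    ring
  -- Claim 1
  have hc1 : φ 0 = 1 := by
    rw [hφ 0]
    simp only [sub_zero]
    rw [div_self]
    exact ne_of_gt ha
  -- Claim 2
  have hc2 : HasDerivAt φ (1 / (l1 * P l)) 0 := by
    have h := hφd 0 (mem_ball_self hr)
    convert h using 1
    rw [hN0val]
    rw [← ha_def]
    simp only [zero_mul, sub_zero]
    rw [sq, div_mul_cancel_left₀ ha.ne', ha_def, one_div]
  -- Claim 3
  have hsNP : HasDerivAt (fun s => s * NP s) b 0 := by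
    rw [hasDerivAt_iff_tendsto_slope]
    have ht : Tendsto NP (nhdsWithin (0:ℝ) {0}ᶜ) (nhds b) := by
      rw [← hNP0]
      exact hNPc.tendsto.mono_left nhdsWithin_le_nhds
    apply ht.congr'
    filter_upwards [self_mem_nhdsWithin] with s hs
    have hs0 : s ≠ 0 := hs
    rw [slope_def_field]
    field_simp
    ring
  have hu : HasDerivAt (fun s => N s - s * NP s) 0 0 := by
    have h := (hN 0 hl).sub hsNP
    rw [hNP0] at h
    simp at h
    exact h
  have hD0 : HasDerivAt (fun s => N s - s) (b - 1) 0 := by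
    have h := (hN 0 hl).sub (hasDerivAt_id 0)
    rwa [hNP0] at h
  have hv : HasDerivAt (fun s => (N s - s) ^ 2) (2 * a * (b - 1)) 0 := by
    have h := hD0.pow 2
    refine h.congr_deriv ?_
    rw [hN0val]
    push_cast
    ring
  have hgden : (N 0 - 0) ^ 2 ≠ 0 := by rw [hN0val]; simpa using pow_ne_zero 2 (ne_of_gt ha)
  have hg0 : HasDerivAt (fun s => (N s - s * NP s) / (N s - s) ^ 2)
      (2 / (l1 ^ 2 * P l ^ 2) - 2 * (Q l) / (l1 * P l ^ 2)) 0 := by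
    have h := hu.div hv hgden
    refine h.congr_deriv ?_
    rw [hN0val, hNP0, ha_def, hb_def]
    have h1 : P l ≠ 0 := ne_of_gt hp
    have h2 : l1 ≠ 0 := ne_of_gt hl1
    field_simp
    ring
  have hc3 : HasDerivAt (deriv φ)
      (2 / (l1 ^ 2 * P l ^ 2) - 2 * (Q l) / (l1 * P l ^ 2)) 0 := by
    apply hg0.congr_of_eventuallyEq
    filter_upwards [ball_mem_nhds (0:ℝ) hr] with s hs
    exact (hφd s hs).deriv
  -- Claim 4
  have hc4 : ∀ Y : Ω → ℝ, (∀ᶠ s in nhds (0 : ℝ), mgf Y μ s = φ s) →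
      (∫ ω, Y ω ∂μ) = 1 / (l1 * P l) ∧
      (∫ ω, (Y ω) ^ 2 ∂μ)
        = 2 * (1 / (l1 ^ 2 * P l ^ 2) - (Q l) / (l1 * P l ^ 2)) := by
    intro Y hY
    obtain ⟨δ₁, hδ₁, hYφ⟩ := Metric.eventually_nhds_iff.mp hY
    set δ : ℝ := min δ₁ r with hδ_def
    have hδ : 0 < δ := lt_min hδ₁ hr
    have hφpos : ∀ s ∈ ball (0:ℝ) r, 0 < φ s := by
      intro s hs
      obtain ⟨hsl, hNs, hDpos⟩ := hfacts s hs
      rw [hφf]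
      exact div_pos (by linarith) hDpos
    have hint : ∀ s : ℝ, |s| < δ → Integrable (fun ω => Real.exp (s * Y ω)) μ := by
      intro s hs
      by_contra hc
      have h0 : mgf Y μ s = 0 := mgf_undef hc
      have h1 : mgf Y μ s = φ s := hYφ (by
        simpa [Real.dist_eq] using lt_of_lt_of_le hs (min_le_left _ _))
      have h2 : 0 < φ s := hφpos s (by
        simpa [Metric.mem_ball, Real.dist_eq] using lt_of_lt_of_le hs (min_le_right _ _))
      rw [h0] at h1
      linarith
    set c : ℝ := δ / 2 with hc_def
    have hcpos : 0 < c := by positivity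
    have hIp : Integrable (fun ω => Real.exp (c * Y ω)) μ :=
      hint c (by rw [abs_of_pos hcpos]; simp [hc_def]; linarith)
    have hIm : Integrable (fun ω => Real.exp (-c * Y ω)) μ :=
      hint (-c) (by rw [abs_neg, abs_of_pos hcpos]; simp [hc_def]; linarith)
    set G : Ω → ℝ := fun ω => Real.exp (c * Y ω) + Real.exp (-c * Y ω) with hG_def
    have hG : Integrable G μ := hIp.add hIm
    have hGb : ∀ ω, Real.exp (c * |Y ω|) ≤ G ω := by
      intro ω
      rcases abs_cases (Y ω) with ⟨h, _⟩ | ⟨h, _⟩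
      · rw [h]
        exact le_add_of_nonneg_right (Real.exp_pos _).le
      · rw [h, mul_neg, ← neg_mul]
        exact le_add_of_nonneg_left (Real.exp_pos _).le
    have hGnn : ∀ ω, 0 ≤ G ω := fun ω =>
      add_nonneg (Real.exp_pos _).le (Real.exp_pos _).le
    have hYae : AEMeasurable Y μ := by
      have h := hIp.aestronglyMeasurable.aemeasurable
      have h2 : AEMeasurable (fun ω => Real.log (Real.exp (c * Y ω)) / c) μ :=
        (Real.measurable_log.comp_aemeasurable h).div_const c
      have h3 : (fun ω => Real.log (Real.exp (c * Y ω)) / c) = Y := by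
        funext ω
        rw [Real.log_exp, mul_div_cancel_left₀ _ (ne_of_gt hcpos)]
      rwa [h3] at h2
    -- generic bound
    have hbnd : ∀ (k : ℕ) (K : ℝ), (∀ t : ℝ, 0 ≤ t → t ^ k ≤ K * Real.exp (c / 2 * t)) →
        ∀ (t₀ : ℝ), t₀ ∈ ball (0:ℝ) (c / 8) → 0 ≤ K →
        ∀ᵐ ω ∂μ, ∀ x ∈ ball t₀ (c / 8), |Y ω| ^ k * Real.exp (x * Y ω) ≤ K * G ω := by
      intro k K hK t₀ ht₀ hKnn
      refine Eventually.of_forall fun ω x hx => ?_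
      have hxb : |x| ≤ c / 4 := by
        have h1 : |x - t₀| < c / 8 := by simpa [Real.dist_eq] using mem_ball_iff_norm.1 hx
        have h2 : |t₀| < c / 8 := by simpa [Metric.mem_ball, Real.dist_eq] using ht₀
        calc |x| = |x - t₀ + t₀| := by ring_nf
          _ ≤ |x - t₀| + |t₀| := abs_add_le _ _
          _ ≤ c / 4 := by linarith
      have he1 : Real.exp (x * Y ω) ≤ Real.exp (c / 4 * |Y ω|) := by
        apply Real.exp_le_exp.2
        calc x * Y ω ≤ |x * Y ω| := le_abs_self _
          _ = |x| * |Y ω| := abs_mul _ _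
          _ ≤ c / 4 * |Y ω| := mul_le_mul_of_nonneg_right hxb (abs_nonneg _)
      have he2 : |Y ω| ^ k ≤ K * Real.exp (c / 2 * |Y ω|) := hK _ (abs_nonneg _)
      calc |Y ω| ^ k * Real.exp (x * Y ω)
          ≤ |Y ω| ^ k * Real.exp (c / 4 * |Y ω|) :=
            mul_le_mul_of_nonneg_left he1 (by positivity)
        _ ≤ (K * Real.exp (c / 2 * |Y ω|)) * Real.exp (c / 4 * |Y ω|) :=
            mul_le_mul_of_nonneg_right he2 (Real.exp_pos _).le
        _ = K * Real.exp (c / 2 * |Y ω| + c / 4 * |Y ω|) := by rw [Real.exp_add]; ring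
        _ ≤ K * Real.exp (c * |Y ω|) := by
            apply mul_le_mul_of_nonneg_left _ hKnn
            apply Real.exp_le_exp.2
            nlinarith [abs_nonneg (Y ω), hcpos]
        _ ≤ K * G ω := mul_le_mul_of_nonneg_left (hGb ω) hKnn
    have hmgfD : ∀ t₀ ∈ ball (0:ℝ) (c / 8),
        Integrable (fun ω => Y ω ^ 1 * Real.exp (t₀ * Y ω)) μ ∧
        HasDerivAt (mgf Y μ) (∫ ω, Y ω ^ 1 * Real.exp (t₀ * Y ω) ∂μ) t₀ := by
      intro t₀ ht₀
      have hi0 : Integrable (fun ω => Y ω ^ 0 * Real.exp (t₀ * Y ω)) μ := by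
        have h1 : |t₀| < δ := by
          have h2 : |t₀| < c / 8 := by simpa [Metric.mem_ball, Real.dist_eq] using ht₀
          simp only [hc_def] at h2
          linarith
        simpa using hint t₀ h1
      have hkb : ∀ t : ℝ, 0 ≤ t → t ^ (0 + 1) ≤ 1 / (c / 2) * Real.exp (c / 2 * t) := by
        intro t ht
        simpa using helper_le_exp (c / 2) t (by linarith)
      have hb := hbnd (0 + 1) (1 / (c / 2)) hkb t₀ ht₀ (by positivity)
      have haux := aux_hasDerivAt_integral_exp μ Y hYae 0 t₀ (c / 8) (by positivity)
        (fun ω => 1 / (c / 2) * G ω) (hG.const_mul _) hb hi0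
      refine ⟨haux.1, ?_⟩
      have h2 := haux.2
      have hfm : (fun x => ∫ ω, Y ω ^ 0 * Real.exp (x * Y ω) ∂μ) = mgf Y μ := by
        funext x
        simp [mgf]
      rwa [hfm] at h2
    have hmgfD2 :
        Integrable (fun ω => Y ω ^ 2 * Real.exp (0 * Y ω)) μ ∧
        HasDerivAt (fun x => ∫ ω, Y ω ^ 1 * Real.exp (x * Y ω) ∂μ)
          (∫ ω, Y ω ^ 2 * Real.exp (0 * Y ω) ∂μ) 0 := by
      have hkb : ∀ t : ℝ, 0 ≤ t → t ^ (1 + 1) ≤ 4 / (c / 2) ^ 2 * Real.exp (c / 2 * t) := by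
        intro t ht
        simpa using helper_sq_le_exp (c / 2) t (by linarith) ht
      have hb := hbnd (1 + 1) (4 / (c / 2) ^ 2) hkb 0 (mem_ball_self (by positivity))
        (by positivity)
      have haux := aux_hasDerivAt_integral_exp μ Y hYae 1 0 (c / 8) (by positivity)
        (fun ω => 4 / (c / 2) ^ 2 * G ω) (hG.const_mul _) hb
        (hmgfD 0 (mem_ball_self (by positivity))).1
      exact haux
    -- first moment
    have hEY : HasDerivAt (mgf Y μ) (∫ ω, Y ω ∂μ) 0 := by
      have h := (hmgfD 0 (mem_ball_self (by positivity))).2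
      have : (∫ ω, Y ω ^ 1 * Real.exp (0 * Y ω) ∂μ) = ∫ ω, Y ω ∂μ := by
        congr 1; funext ω; simp
      rwa [this] at h
    have hYev : mgf Y μ =ᶠ[nhds (0:ℝ)] φ := hY
    have hEYval : (∫ ω, Y ω ∂μ) = 1 / (l1 * P l) :=
      (hEY.congr_of_eventuallyEq hYev.symm).unique hc2
    -- second moment
    have hd1 : deriv φ =ᶠ[nhds (0:ℝ)]
        fun t => ∫ ω, Y ω ^ 1 * Real.exp (t * Y ω) ∂μ := by
      have e1 : deriv (mgf Y μ) =ᶠ[nhds (0:ℝ)] deriv φ := Filter.EventuallyEq.deriv hYev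
      have e2 : ∀ᶠ t in nhds (0:ℝ),
          deriv (mgf Y μ) t = ∫ ω, Y ω ^ 1 * Real.exp (t * Y ω) ∂μ := by
        filter_upwards [ball_mem_nhds (0:ℝ) (by positivity : (0:ℝ) < c / 8)] with t ht
        exact ((hmgfD t ht).2).deriv
      exact e1.symm.trans e2
    have hEY2 : HasDerivAt (deriv φ) (∫ ω, Y ω ^ 2 * Real.exp (0 * Y ω) ∂μ) 0 :=
      hmgfD2.2.congr_of_eventuallyEq hd1
    have hval2 : (∫ ω, Y ω ^ 2 * Real.exp (0 * Y ω) ∂μ)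
        = 2 / (l1 ^ 2 * P l ^ 2) - 2 * (Q l) / (l1 * P l ^ 2) := hEY2.unique hc3
    have hsimp : (∫ ω, Y ω ^ 2 * Real.exp (0 * Y ω) ∂μ) = ∫ ω, (Y ω) ^ 2 ∂μ := by
      congr 1; funext ω; simp
    refine ⟨hEYval, ?_⟩
    rw [← hsimp, hval2]
    ring
  exact ⟨hc1, hc2, hc3, hc4⟩
end
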